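/- For w ∈ ℂ, let u(w) = (2w/(1+|w|²), (1−|w|²)/(1+|w|²)) ∈ ℂ × ℝ ≅ ℝ³ (the unit direction vector corresponding to w), with the Euclidean inner product ⟨(z,t),(z′,t′)⟩ = Re(z z̄′) + t t′. Then: (a) for every ν ∈ ℂ and A ∈ ℝ with 1 − ν̄e^{iA} ≠ 0, setting ξ = (ν + e^{iA})/(1 − ν̄e^{iA}), one has ⟨u(ξ), u(ν)⟩ = 0; (b) conversely, every w ∈ ℂ × ℝ with ‖w‖ = 1, ⟨w, u(ν)⟩ = 0 and w ≠ (0,−1) equals u((ν + e^{iA})/(1 − ν̄e^{iA})) for some A ∈ ℝ with 1 − ν̄e^{iA} ≠ 0. Thus A ↦ ξ(ν,A) parameterizes the oriented great circle in S² dual to the point with holomorphic coordinate ν. -/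

import Mathlib

/-- The unit direction vector of ℝ³ ≅ ℂ × ℝ corresponding to w ∈ ℂ (inverse stereographic
projection): u(w) = (2w/(1+|w|²), (1−|w|²)/(1+|w|²)). -/
noncomputable def udir (w : ℂ) : ℂ × ℝ :=
  (2 * w / (1 + Complex.normSq w), (1 - Complex.normSq w) / (1 + Complex.normSq w))

/-- The Euclidean inner product on ℂ × ℝ ≅ ℝ³. -/
def ip3 (x y : ℂ × ℝ) : ℝ := (x.1 * (starRingEnd ℂ) y.1).re + x.2 * y.2

open Complex

lemma npos (z : ℂ) : (0:ℝ) < 1 + normSq z := by nlinarith [normSq_nonneg z]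

lemma ip3_udir (ξ ν : ℂ) : ip3 (udir ξ) (udir ν) =
    (4 * (ξ * (starRingEnd ℂ) ν).re + (1 - normSq ξ) * (1 - normSq ν)) /
      ((1 + normSq ξ) * (1 + normSq ν)) := by
  have h1 := (npos ξ).ne'
  have h2 := (npos ν).ne'
  have h1' : ((1:ℂ) + normSq ξ) ≠ 0 := by
    simpa using Complex.ofReal_ne_zero.2 h1
  have h2' : ((1:ℂ) + normSq ν) ≠ 0 := by
    simpa using Complex.ofReal_ne_zero.2 h2
  simp only [ip3, udir, map_div₀, map_mul, map_add, map_one, map_ofNat, Complex.conj_ofReal]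
  have : 2 * ξ / (1 + (normSq ξ:ℂ)) * (2 * (starRingEnd ℂ) ν / (1 + (normSq ν:ℂ)))
      = (4 * (ξ * (starRingEnd ℂ) ν)) / (((1 + normSq ξ) * (1 + normSq ν) : ℝ) : ℂ) := by
    push_cast
    field_simp
    ring
  rw [this, Complex.div_ofReal_re]
  field_simp
  simp only [Complex.mul_re, Complex.mul_im, Complex.re_ofNat, Complex.im_ofNat]
  ring


lemma re_ofReal (z : ℂ) : ((z.re : ℂ)) = (z + (starRingEnd ℂ) z) / 2 := by
  rw [Complex.add_conj]; push_cast; ring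

lemma partA (ν : ℂ) (A : ℝ) (hq : 1 - (starRingEnd ℂ) ν * Complex.exp ((A : ℂ) * Complex.I) ≠ 0) :
    ip3 (udir ((ν + Complex.exp ((A : ℂ) * Complex.I)) /
        (1 - (starRingEnd ℂ) ν * Complex.exp ((A : ℂ) * Complex.I)))) (udir ν) = 0 := by
  set e := Complex.exp ((A : ℂ) * Complex.I) with hedef
  have he : e * (starRingEnd ℂ) e = 1 := by
    rw [Complex.mul_conj]
    norm_cast
    simp [hedef, Complex.normSq_eq_norm_sq]
  set q := 1 - (starRingEnd ℂ) ν * e with hqdef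
  rw [ip3_udir, div_eq_zero_iff]
  left
  have hq' : (starRingEnd ℂ) q ≠ 0 := by simpa using hq
  rw [← Complex.ofReal_eq_zero]
  push_cast [re_ofReal, ← Complex.mul_conj, map_div₀, map_mul, map_add, map_sub, map_one, Complex.conj_conj]
  field_simp
  simp only [hqdef, map_sub, map_mul, map_one, Complex.conj_conj]
  linear_combination (-(2 * (1 + ν * (starRingEnd ℂ) ν)^2)) * he

lemma partB (ν : ℂ) : (∀ w : ℂ × ℝ, Complex.normSq w.1 + w.2 ^ 2 = 1 → ip3 w (udir ν) = 0 →
      w ≠ ((0 : ℂ), (-1 : ℝ)) →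
      ∃ A : ℝ, 1 - (starRingEnd ℂ) ν * Complex.exp ((A : ℂ) * Complex.I) ≠ 0 ∧
        w = udir ((ν + Complex.exp ((A : ℂ) * Complex.I)) /
          (1 - (starRingEnd ℂ) ν * Complex.exp ((A : ℂ) * Complex.I)))) := by
  rintro ⟨z, t⟩ hnorm horth hne
  simp only at hnorm horth ⊢
  -- t ≠ -1
  have ht : 1 + t ≠ 0 := by
    intro h
    have ht' : t = -1 := by linarith
    have hz : z = 0 := by
      have : normSq z = 0 := by rw [ht'] at hnorm; nlinarith
      exact normSq_eq_zero.1 this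
    exact hne (by simp [hz, ht'])
  set ξ : ℂ := z / ((1 + t : ℝ) : ℂ) with hxi
  have hzt : z = ((1 + t : ℝ) : ℂ) * ξ := by
    rw [hxi, mul_div_cancel₀]
    exact_mod_cast Complex.ofReal_ne_zero.2 ht
  -- w = udir ξ
  have hnξ : normSq ξ = (1 - t) / (1 + t) := by
    rw [hxi, Complex.normSq_div]
    have : normSq ((1 + t : ℝ) : ℂ) = (1+t)^2 := by
      rw [Complex.normSq_ofReal]; ring
    rw [this]
    have hz2 : normSq z = 1 - t^2 := by linarith
    rw [hz2]
    field_simp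
    ring
  have h1ξ : 1 + normSq ξ = 2 / (1 + t) := by
    rw [hnξ]; field_simp; ring
  have hw : ((z, t) : ℂ × ℝ) = udir ξ := by
    have htne : ((1 + t : ℝ) : ℂ) ≠ 0 := Complex.ofReal_ne_zero.2 ht
    refine Prod.ext ?_ ?_
    · show z = 2 * ξ / (1 + (normSq ξ : ℂ))
      have hc : (1 + ((normSq ξ : ℝ) : ℂ)) = 2 / ((1 + t : ℝ) : ℂ) := by
        exact_mod_cast congrArg (Complex.ofReal) h1ξ
      rw [hzt, hc]
      field_simp
    · show t = (1 - normSq ξ) / (1 + normSq ξ)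
      rw [hnξ]
      field_simp
      ring
  -- orthogonality numerator
  have horth' : 4 * (ξ * (starRingEnd ℂ) ν).re + (1 - normSq ξ) * (1 - normSq ν) = 0 := by
    rw [hw, ip3_udir, div_eq_zero_iff] at horth
    rcases horth with h | h
    · exact h
    · exfalso
      have := mul_ne_zero (npos ξ).ne' (npos ν).ne'
      exact this h
  -- key modulus identity
  have hkey : normSq (1 + ξ * (starRingEnd ℂ) ν) = normSq (ξ - ν) := by
    rw [← Complex.ofReal_inj]
    push_cast [← Complex.mul_conj, map_add, map_sub, map_mul, map_one, Complex.conj_conj]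
    have horthC : ((4 * (ξ * (starRingEnd ℂ) ν).re + (1 - normSq ξ) * (1 - normSq ν) : ℝ) : ℂ) = 0 := by
      rw [horth']; norm_num
    push_cast [← Complex.mul_conj] at horthC
    rw [re_ofReal, map_mul, Complex.conj_conj] at horthC
    linear_combination horthC
  have hd : 1 + ξ * (starRingEnd ℂ) ν ≠ 0 := by
    intro h
    rw [h, map_zero] at hkey
    have hξν : ξ = ν := sub_eq_zero.1 (normSq_eq_zero.1 hkey.symm)
    rw [hξν, Complex.mul_conj] at h
    have : (1 + normSq ν : ℝ) = 0 := by exact_mod_cast h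
    exact (npos ν).ne' this
  -- define e and A
  set e : ℂ := (ξ - ν) / (1 + ξ * (starRingEnd ℂ) ν) with hedef
  have hnd : normSq (1 + ξ * (starRingEnd ℂ) ν) ≠ 0 := fun h0 => hd (normSq_eq_zero.1 h0)
  have hne1 : normSq e = 1 := by
    rw [hedef, Complex.normSq_div, ← hkey, div_self hnd]
  have habs : ‖e‖ = 1 := by
    have := Complex.sq_norm e
    nlinarith [norm_nonneg e]
  have h1nν : (1 + ((normSq ν : ℝ) : ℂ)) ≠ 0 := by
    intro h0
    have : (1 + normSq ν : ℝ) = 0 := by exact_mod_cast h0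
    exact (npos ν).ne' this
  have hrepr : 1 - (starRingEnd ℂ) ν * e = (1 + ((normSq ν : ℝ) : ℂ)) / (1 + ξ * (starRingEnd ℂ) ν) := by
    rw [hedef]
    have hd' : 1 + (starRingEnd ℂ) ν * ξ ≠ 0 := by rwa [mul_comm]
    field_simp
    linear_combination Complex.mul_conj ν
  have hqne : 1 - (starRingEnd ℂ) ν * e ≠ 0 := by
    rw [hrepr]
    exact div_ne_zero h1nν hd
  have hxival : (ν + e) / (1 - (starRingEnd ℂ) ν * e) = ξ := by
    rw [div_eq_iff hqne, hrepr, hedef]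
    field_simp
    linear_combination ξ * Complex.mul_conj ν
  refine ⟨e.arg, ?_, ?_⟩ <;> rw [show Complex.exp ((e.arg : ℂ) * Complex.I) = e by
    have := Complex.norm_mul_exp_arg_mul_I e
    rwa [habs, Complex.ofReal_one, one_mul] at this]
  · exact hqne
  · rw [hxival]; exact hw

/-- A ↦ ξ(ν,A) = (ν + e^{iA})/(1 − ν̄e^{iA}) parameterizes the oriented great circle in S²
dual to the point with holomorphic coordinate ν: (a) u(ξ(ν,A)) ⊥ u(ν); (b) every unit
vector orthogonal to u(ν) other than the south pole (0,−1) is of this form. -/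
theorem stmt10 (ν : ℂ) :
    (∀ A : ℝ, 1 - (starRingEnd ℂ) ν * Complex.exp ((A : ℂ) * Complex.I) ≠ 0 →
      ip3 (udir ((ν + Complex.exp ((A : ℂ) * Complex.I)) /
          (1 - (starRingEnd ℂ) ν * Complex.exp ((A : ℂ) * Complex.I)))) (udir ν) = 0) ∧
    (∀ w : ℂ × ℝ, Complex.normSq w.1 + w.2 ^ 2 = 1 → ip3 w (udir ν) = 0 →
      w ≠ ((0 : ℂ), (-1 : ℝ)) →
      ∃ A : ℝ, 1 - (starRingEnd ℂ) ν * Complex.exp ((A : ℂ) * Complex.I) ≠ 0 ∧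
        w = udir ((ν + Complex.exp ((A : ℂ) * Complex.I)) /
          (1 - (starRingEnd ℂ) ν * Complex.exp ((A : ℂ) * Complex.I)))) := by
  exact ⟨fun A hq => partA ν A hq, partB ν⟩
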